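/- Let G = S∞ be the group of all permutations of ℤ, equipped with the topology of pointwise convergence, and let H = {σ ∈ G | σ is strictly increasing for the usual order on ℤ} (equivalently, H is the group of translations of ℤ). Then the pair (G,H) is relatively extremely amenable: every continuous action of G on a nonempty compact Hausdorff space has a point fixed by every element of H. -/

import Mathlib

open Topology Uniformity

/-- A topological group `G` is *extremely amenable* if every continuous action of `G`
on a nonempty compact Hausdorff space has a `G`-fixed point. -/
def ExtremelyAmenable (G : Type) [Group G] [TopologicalSpace G] : Prop :=
  ∀ (X : Type) [TopologicalSpace X] [CompactSpace X] [T2Space X] [Nonempty X]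
    [MulAction G X] [ContinuousSMul G X], ∃ x : X, ∀ g : G, g • x = x

/-- The pair `(G, H)` is *relatively extremely amenable* if every continuous action of `G`
on a nonempty compact Hausdorff space has a point fixed by every element of `H`. -/
def RelativelyExtremelyAmenable (G : Type) [Group G] [TopologicalSpace G] (H : Subgroup G) :
    Prop :=
  ∀ (X : Type) [TopologicalSpace X] [CompactSpace X] [T2Space X] [Nonempty X]
    [MulAction G X] [ContinuousSMul G X], ∃ x : X, ∀ h ∈ H, h • x = x
/-- The topology of pointwise convergence on the permutation group of a set `α`
(`α` being given the discrete topology): the topology induced by the embedding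
`σ ↦ (σ, σ⁻¹)` into `(α → α) × (α → α)`. -/
def permPointwiseTopology (α : Type) : TopologicalSpace (Equiv.Perm α) :=
  letI : TopologicalSpace α := ⊥
  TopologicalSpace.induced
    (fun σ : Equiv.Perm α => ((⇑σ, ⇑σ.symm) : (α → α) × (α → α))) inferInstance

/-- The subgroup of the permutation group of a linear order `α` consisting of the
permutations that are strictly increasing. -/
def strictMonoPerms (α : Type) [LinearOrder α] : Subgroup (Equiv.Perm α) where
  carrier := {σ : Equiv.Perm α | StrictMono ⇑σ}
  one_mem' := fun _ _ h => h
  mul_mem' := fun ha hb _ _ h => ha (hb h)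
  inv_mem' := by
    intro a ha x y hxy
    have h := ha.lt_iff_lt (a := a⁻¹ x) (b := a⁻¹ y)
    rw [← Equiv.Perm.mul_apply, ← Equiv.Perm.mul_apply, mul_inv_cancel, Equiv.Perm.one_apply,
      Equiv.Perm.one_apply] at h
    exact h.mp hxy

noncomputable instance : TopologicalSpace (Equiv.Perm ℤ) := permPointwiseTopology ℤ

/-! ### Auxiliary lemmas -/

private lemma snoc_strictMono {n : ℕ} {f : Fin (n+1) → ℤ} (hf : StrictMono f) {b : ℤ}
    (hb : f (Fin.last n) < b) : StrictMono (Fin.snoc f b : Fin (n+2) → ℤ) := by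
  rw [Fin.strictMono_iff_lt_succ]
  intro i
  induction i using Fin.lastCases with
  | last =>
      rw [Fin.succ_last]
      simpa [Fin.snoc_castSucc, Fin.snoc_last] using hb
  | cast j =>
      rw [Fin.succ_castSucc]
      rw [Fin.snoc_castSucc, Fin.snoc_castSucc]; exact hf (Fin.castSucc_lt_succ (i := j))

/-- The shift graph on strictly increasing `ℤ`-tuples admits no finite proper coloring. -/
private lemma shift_lemma : ∀ (k : ℕ) (κ : Type) [Fintype κ]
    (c : (Fin (k+1) → ℤ) → κ),
    ∃ ψ : Fin (k+2) → ℤ, StrictMono ψ ∧ c (ψ ∘ Fin.castSucc) = c (ψ ∘ Fin.succ) := by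
  intro k
  induction k with
  | zero =>
      intro κ _ c
      by_contra hcon
      push_neg at hcon
      have hinj : Function.Injective (fun a : ℤ => c (fun _ => a)) := by
        intro a b hab
        by_contra hne
        rcases lt_or_gt_of_ne hne with h | h
        · refine hcon ![a, b] ?_ ?_
          · intro i j hij
            fin_cases i <;> fin_cases j <;> simp_all
          · have e1 : (![a,b] ∘ Fin.castSucc : Fin 1 → ℤ) = fun _ => a := by
              funext i; fin_cases i; rfl
            have e2 : (![a,b] ∘ Fin.succ : Fin 1 → ℤ) = fun _ => b := by
              funext i; fin_cases i; rfl
            rw [e1, e2]; exact hab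
        · refine hcon ![b, a] ?_ ?_
          · intro i j hij
            fin_cases i <;> fin_cases j <;> simp_all
          · have e1 : (![b,a] ∘ Fin.castSucc : Fin 1 → ℤ) = fun _ => b := by
              funext i; fin_cases i; rfl
            have e2 : (![b,a] ∘ Fin.succ : Fin 1 → ℤ) = fun _ => a := by
              funext i; fin_cases i; rfl
            rw [e1, e2]; exact hab.symm
      exact (Finite.exists_ne_map_eq_of_infinite _).elim (fun a ⟨b, hne, he⟩ => hne (hinj he))
  | succ k ih =>
      intro κ _ c
      by_contra hcon
      push_neg at hcon
      classical
      set d : (Fin (k+1) → ℤ) → Finset κ := fun φ =>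
        Finset.univ.filter (fun i => ∃ b, φ (Fin.last k) < b ∧ c (Fin.snoc φ b) = i) with hd
      obtain ⟨σ, hσ, hσeq⟩ := ih (Finset κ) d
      set φ := σ ∘ Fin.castSucc with hφ
      set φ' := σ ∘ Fin.succ with hφ'
      have hb0 : φ (Fin.last k) < σ (Fin.last (k+1)) := hσ (Fin.castSucc_lt_last _)
      have hσsnoc : Fin.snoc φ (σ (Fin.last (k+1))) = σ := by
        have : φ = Fin.init σ := by funext i; rfl
        rw [this]; exact Fin.snoc_init_self σ
      have hmem : c σ ∈ d φ := by
        rw [hd]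
        simp only [Finset.mem_filter, Finset.mem_univ, true_and]
        exact ⟨σ (Fin.last (k+1)), hb0, by rw [hσsnoc]⟩
      rw [hσeq] at hmem
      rw [hd] at hmem
      simp only [Finset.mem_filter, Finset.mem_univ, true_and] at hmem
      obtain ⟨b₁, hb₁, hcb₁⟩ := hmem
      have hlast : φ' (Fin.last k) = σ (Fin.last (k+1)) := by
        simp [hφ', Fin.succ_last]
      have hρmono : StrictMono (Fin.snoc σ b₁ : Fin (k+3) → ℤ) :=
        snoc_strictMono hσ (by rw [← hlast]; exact hb₁)
      have e1 : ((Fin.snoc σ b₁ : Fin (k+3) → ℤ) ∘ Fin.castSucc) = σ := by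
        funext i; simp [Fin.snoc_castSucc]
      have e2 : ((Fin.snoc σ b₁ : Fin (k+3) → ℤ) ∘ Fin.succ) = Fin.snoc φ' b₁ := by
        funext i
        induction i using Fin.lastCases with
        | last => simp [Fin.succ_last, Fin.snoc_last]
        | cast j =>
            simp only [Function.comp_apply, Fin.succ_castSucc, Fin.snoc_castSucc]
            rfl
      have := hcon (Fin.snoc σ b₁) hρmono
      rw [e1, e2, hcb₁] at this
      exact this rfl

/-- Any two injective tuples of integers are related by a permutation of `ℤ`. -/
private lemma exists_perm_extend {m : ℕ} (φ ψ : Fin m → ℤ) (hφ : Function.Injective φ)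
    (hψ : Function.Injective ψ) : ∃ g : Equiv.Perm ℤ, ∀ i, g (φ i) = ψ i := by
  classical
  set s : Set ℤ := Set.range φ with hs
  set t : Set ℤ := Set.range ψ with ht
  have hsf : s.Finite := Set.finite_range φ
  have htf : t.Finite := Set.finite_range ψ
  haveI : Infinite ↥sᶜ := hsf.infinite_compl.to_subtype
  haveI : Infinite ↥tᶜ := htf.infinite_compl.to_subtype
  obtain ⟨e₃⟩ : Nonempty (↥sᶜ ≃ ↥tᶜ) := nonempty_equiv_of_countable
  let e₁ : Fin m ≃ s := Equiv.ofInjective φ hφ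
  let e₂ : Fin m ≃ t := Equiv.ofInjective ψ hψ
  refine ⟨(Equiv.Set.sumCompl s).symm.trans
    (((e₁.symm.trans e₂).sumCongr e₃).trans (Equiv.Set.sumCompl t)), fun i => ?_⟩
  have h1 : (Equiv.Set.sumCompl s).symm (φ i) = Sum.inl ⟨φ i, Set.mem_range_self i⟩ :=
    Equiv.Set.sumCompl_symm_apply_of_mem (Set.mem_range_self i)
  simp only [Equiv.trans_apply, h1, Equiv.sumCongr_apply, Sum.map_inl]
  have h2 : e₁.symm ⟨φ i, Set.mem_range_self i⟩ = i := Equiv.ofInjective_symm_apply hφ i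
  rw [h2]
  have h3 : e₂ i = ⟨ψ i, Set.mem_range_self i⟩ := rfl
  rw [h3, Equiv.Set.sumCompl_apply_inl]

private lemma strictMono_perm_eq (h : Equiv.Perm ℤ) (hs : StrictMono ⇑h) :
    ∀ n : ℤ, h n = n + h 0 := by
  have hinv : StrictMono ⇑(h⁻¹) := by
    intro x y hxy
    have hiff := hs.lt_iff_lt (a := h⁻¹ x) (b := h⁻¹ y)
    rw [show ∀ y, h (h⁻¹ y) = y from fun y => h.apply_symm_apply y,
      show ∀ y, h (h⁻¹ y) = y from fun y => h.apply_symm_apply y] at hiff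
    exact hiff.mp hxy
  have key : ∀ n : ℤ, h (n+1) = h n + 1 := by
    intro n
    have h1 : h n + 1 ≤ h (n+1) := by
      have := hs (show n < n+1 by omega); omega
    have h2 : h (n+1) ≤ h n + 1 := by
      by_contra hc
      push_neg at hc
      have ha : h⁻¹ (h n) < h⁻¹ (h n + 1) := hinv (by omega)
      have hb : h⁻¹ (h n + 1) < h⁻¹ (h (n+1)) := hinv (by omega)
      rw [show ∀ y, h⁻¹ (h y) = y from fun y => h.symm_apply_apply y] at ha hb
      omega
    omega
  intro n
  induction n using Int.induction_on with
  | zero => omega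
  | succ k ih => have := key (k : ℤ); omega
  | pred k ih =>
      have := key (-(k:ℤ)-1)
      have e2 : (-(k:ℤ)-1) + 1 = -(k:ℤ) := by ring
      rw [e2] at this
      omega

private lemma fixed_of_fixed_shift {X : Type} [MulAction (Equiv.Perm ℤ) X] {z : X}
    (hz : (Equiv.addRight (1:ℤ)) • z = z) (h : Equiv.Perm ℤ) (hs : StrictMono ⇑h) :
    h • z = z := by
  have hadd : ∀ d : ℤ, (Equiv.addRight d) • z = z := by
    intro d
    induction d using Int.induction_on with
    | zero =>
        have : (Equiv.addRight (0:ℤ)) = (1 : Equiv.Perm ℤ) := by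
          ext n; simp
        rw [this, one_smul]
    | succ k ih =>
        have : (Equiv.addRight ((k:ℤ)+1)) =
            (Equiv.addRight (1:ℤ)) * (Equiv.addRight (k:ℤ)) := by
          ext n; simp [Equiv.Perm.mul_apply]
        rw [this, mul_smul, ih, hz]
    | pred k ih =>
        have hinv1 : ((Equiv.addRight (1:ℤ))⁻¹ : Equiv.Perm ℤ) = Equiv.addRight (-1 : ℤ) := by
          rw [eq_comm, eq_inv_iff_mul_eq_one]
          ext x; simp [Equiv.Perm.mul_apply]
        have hm : (Equiv.addRight (-(k:ℤ)-1)) =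
            (Equiv.addRight (1:ℤ))⁻¹ * (Equiv.addRight (-(k:ℤ))) := by
          rw [hinv1]; ext n; simp [Equiv.Perm.mul_apply]; ring
        rw [hm, mul_smul, ih, inv_smul_eq_iff, hz]
  have heq : h = Equiv.addRight (h 0) := by
    ext n; simp [strictMono_perm_eq h hs n]
  rw [heq]; exact hadd (h 0)

private lemma perm_nhds_one {v : Set (Equiv.Perm ℤ)} (hv : v ∈ 𝓝 (1 : Equiv.Perm ℤ)) :
    ∃ F : Finset ℤ, ∀ g : Equiv.Perm ℤ, (∀ a ∈ F, g a = a) → g ∈ v := by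
  classical
  letI tZ : TopologicalSpace ℤ := ⊥
  letI tF : TopologicalSpace (ℤ → ℤ) := Pi.topologicalSpace
  letI tP : TopologicalSpace ((ℤ → ℤ) × (ℤ → ℤ)) := instTopologicalSpaceProd
  have hnhds : 𝓝 (1 : Equiv.Perm ℤ) =
      Filter.comap (fun σ : Equiv.Perm ℤ => ((⇑σ, ⇑σ.symm) : (ℤ → ℤ) × (ℤ → ℤ)))
        (𝓝 (((1 : Equiv.Perm ℤ) : ℤ → ℤ), ((1 : Equiv.Perm ℤ).symm : ℤ → ℤ))) :=
    nhds_induced _ _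
  rw [hnhds, Filter.mem_comap] at hv
  obtain ⟨S, hS, hSv⟩ := hv
  rw [nhds_prod_eq, Filter.mem_prod_iff] at hS
  obtain ⟨S₁, hS₁, S₂, hS₂, hmul⟩ := hS
  rw [nhds_pi, Filter.mem_pi] at hS₁ hS₂
  obtain ⟨I₁, hI₁fin, t₁, ht₁, ht₁sub⟩ := hS₁
  obtain ⟨I₂, hI₂fin, t₂, ht₂, ht₂sub⟩ := hS₂
  refine ⟨hI₁fin.toFinset ∪ hI₂fin.toFinset, fun g hg => ?_⟩
  apply hSv
  apply hmul
  have hmem : ∀ (a : ℤ) (t : Set ℤ), t ∈ @nhds ℤ tZ a → a ∈ t := by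
    intro a t hta
    exact mem_of_mem_nhds hta
  constructor
  · apply ht₁sub
    intro a haI
    have hga : g a = a := hg a (by simp [Set.Finite.mem_toFinset, haI])
    have := hmem a (t₁ a) ?_
    · show (⇑g : ℤ → ℤ) a ∈ t₁ a
      rw [hga]
      convert this using 2
    · have := ht₁ a
      convert this using 2
      rfl
  · apply ht₂sub
    intro a haI
    have hga : g a = a := hg a (by simp [Set.Finite.mem_toFinset, haI])
    have hgsa : g.symm a = a := by
      conv_lhs => rw [← hga]
      exact g.symm_apply_apply a
    have := hmem a (t₂ a) ?_
    · show (⇑g.symm : ℤ → ℤ) a ∈ t₂ a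
      rw [hgsa]
      convert this using 2
    · have := ht₂ a
      convert this using 2
      rfl

/-- For `S∞` the permutation group of `ℤ` with the topology of pointwise convergence and
`H` the subgroup of strictly increasing permutations (the translations), the pair
`(S∞, H)` is relatively extremely amenable. -/
theorem relativelyExtremelyAmenable_permInt_strictMono :
    RelativelyExtremelyAmenable (Equiv.Perm ℤ) (strictMonoPerms ℤ) := by
  intro X _ _ _ _ _ _
  classical
  letI U : UniformSpace X := uniformSpaceOfCompactR1
  set τ : Equiv.Perm ℤ := Equiv.addRight (1 : ℤ) with hτdef
  have hτinv : ∀ b : ℤ, (τ⁻¹ : Equiv.Perm ℤ) b = b - 1 := by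
    intro b
    have : (τ⁻¹ : Equiv.Perm ℤ) = Equiv.addRight (-1 : ℤ) := by
      rw [eq_comm, eq_inv_iff_mul_eq_one]
      ext x; simp [Equiv.Perm.mul_apply, hτdef]
    rw [this]; simp; ring
  -- Lemma A : uniform equicontinuity near the identity
  have lemA : ∀ V ∈ 𝓤 X, ∃ F : Finset ℤ, ∀ g : Equiv.Perm ℤ,
      (∀ a ∈ F, g a = a) → ∀ y : X, (g • y, y) ∈ V := by
    intro V hV
    obtain ⟨W, ⟨hW𝓤, hWopen⟩, hWV⟩ := uniformity_hasBasis_open.mem_iff.1 hV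
    have hcont : Continuous (fun p : Equiv.Perm ℤ × X => ((p.1 • p.2 : X), p.2)) :=
      continuous_smul.prodMk continuous_snd
    have huo : IsOpen ((fun p : Equiv.Perm ℤ × X => ((p.1 • p.2 : X), p.2)) ⁻¹' W) :=
      hWopen.preimage hcont
    have hsub : ({(1 : Equiv.Perm ℤ)} : Set (Equiv.Perm ℤ)) ×ˢ (Set.univ : Set X) ⊆
        (fun p : Equiv.Perm ℤ × X => ((p.1 • p.2 : X), p.2)) ⁻¹' W := by
      rintro ⟨g, y⟩ ⟨hg, -⟩
      simp only [Set.mem_singleton_iff] at hg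
      subst hg
      show ((1 : Equiv.Perm ℤ) • y, y) ∈ W
      rw [one_smul]
      exact refl_mem_uniformity hW𝓤
    obtain ⟨u, w, huo', hwo, h1u, hunivw, huw⟩ :=
      generalized_tube_lemma isCompact_singleton isCompact_univ huo hsub
    obtain ⟨F, hF⟩ := perm_nhds_one (huo'.mem_nhds (h1u rfl))
    refine ⟨F, fun g hg y => ?_⟩
    have hmem2 : (g, y) ∈ u ×ˢ w := ⟨hF g hg, hunivw (Set.mem_univ y)⟩
    exact hWV (huw hmem2)
  -- approximate fixed points for the shift
  have approx : ∀ V ∈ 𝓤 X, ∃ z : X, (z, τ • z) ∈ V := by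
    intro V hV
    obtain ⟨V₁, hV₁, hV₁V⟩ := comp_mem_uniformity_sets hV
    obtain ⟨V₂, hV₂, hV₂V⟩ := comp_mem_uniformity_sets hV₁
    set W := SetRel.symmetrize V₂ with hWdef
    have hW : W ∈ 𝓤 X := symmetrize_mem_uniformity hV₂
    have hWsymm : SetRel.IsSymm W := by rw [hWdef]; infer_instance
    have hWsub : W ⊆ V₂ := SetRel.symmetrize_subset_self
    have chain : ∀ a b c d e : X,
        (a,b) ∈ W → (b,c) ∈ W → (c,d) ∈ W → (d,e) ∈ W → (a,e) ∈ V := by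
      intro a b c d e h1 h2 h3 h4
      exact hV₁V ⟨c, hV₂V ⟨b, hWsub h1, hWsub h2⟩, hV₂V ⟨d, hWsub h3, hWsub h4⟩⟩
    obtain ⟨F, hF⟩ := lemA W hW
    obtain ⟨M, hM⟩ : ∃ M : ℕ, ∀ a ∈ F, -(M:ℤ) ≤ a ∧ a ≤ M := by
      refine ⟨F.sup (fun a => a.natAbs), fun a ha => ?_⟩
      have := Finset.le_sup (f := fun a : ℤ => a.natAbs) ha
      omega
    -- a finite cover by small balls
    obtain ⟨Wo, ⟨hWo𝓤, hWoOpen⟩, hWoW⟩ := uniformity_hasBasis_open.mem_iff.1 hW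
    have hballs : ∀ y : X, IsOpen (UniformSpace.ball y Wo) :=
      fun y => UniformSpace.isOpen_ball y hWoOpen
    have hcover : (Set.univ : Set X) ⊆ ⋃ y : X, UniformSpace.ball y Wo := by
      intro p _
      exact Set.mem_iUnion.2 ⟨p, UniformSpace.mem_ball_self p hWo𝓤⟩
    obtain ⟨t, ht⟩ := isCompact_univ.elim_finite_subcover _ hballs hcover
    have x0 : X := Classical.arbitrary X
    have hcenter : ∀ p : X, ∃ y, y ∈ t ∧ p ∈ UniformSpace.ball y Wo := by
      intro p
      have := ht (Set.mem_univ p)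
      simpa using this
    choose ctr hctrmem hctrball using hcenter
    -- the permutation chooser
    have gex : ∀ (m : ℕ) (φ : Fin m → ℤ), Function.Injective φ →
        ∃ g : Equiv.Perm ℤ, ∀ i, g (φ i) = ((i : ℕ) : ℤ) - M := by
      intro m φ hφ
      refine exists_perm_extend φ (fun i => ((i : ℕ) : ℤ) - M) hφ ?_
      intro i j hij
      simp only at hij
      have hval : (i : ℕ) = (j : ℕ) := by omega
      exact Fin.ext hval
    -- the coloring
    set κ := {y : X // y ∈ t} with hκ
    haveI : Fintype κ := FinsetCoe.fintype t
    set c : (Fin (2*M+1) → ℤ) → κ := fun φ =>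
      if h : Function.Injective φ then
        ⟨ctr ((Classical.choose (gex _ φ h)) • x0), hctrmem _⟩
      else ⟨ctr x0, hctrmem x0⟩ with hc
    obtain ⟨ψ, hψmono, hψc⟩ := shift_lemma (2*M) κ c
    set φ : Fin (2*M+1) → ℤ := ψ ∘ Fin.castSucc with hφdef
    set φ' : Fin (2*M+1) → ℤ := ψ ∘ Fin.succ with hφ'def
    have hφinj : Function.Injective φ :=
      (hψmono.comp Fin.strictMono_castSucc).injective
    have hφ'inj : Function.Injective φ' :=
      (hψmono.comp Fin.strictMono_succ).injective
    set g : Equiv.Perm ℤ := Classical.choose (gex _ ψ hψmono.injective) with hgdef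
    have hg : ∀ i, g (ψ i) = ((i : ℕ) : ℤ) - M :=
      Classical.choose_spec (gex _ ψ hψmono.injective)
    set g1 : Equiv.Perm ℤ := Classical.choose (gex _ φ hφinj) with hg1def
    have hg1 : ∀ i, g1 (φ i) = ((i : ℕ) : ℤ) - M := Classical.choose_spec (gex _ φ hφinj)
    set g2 : Equiv.Perm ℤ := Classical.choose (gex _ φ' hφ'inj) with hg2def
    have hg2 : ∀ i, g2 (φ' i) = ((i : ℕ) : ℤ) - M := Classical.choose_spec (gex _ φ' hφ'inj)
    -- g realizes the first window
    have hgφ : ∀ i : Fin (2*M+1), g (φ i) = ((i : ℕ) : ℤ) - M := by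
      intro i
      have := hg (Fin.castSucc i)
      simpa [Fin.coe_castSucc, hφdef] using this
    -- τ⁻¹ * g realizes the second window
    have hgφ' : ∀ i : Fin (2*M+1), (τ⁻¹ * g) (φ' i) = ((i : ℕ) : ℤ) - M := by
      intro i
      have h1 := hg (Fin.succ i)
      rw [Equiv.Perm.mul_apply]
      show (τ⁻¹ : Equiv.Perm ℤ) (g (ψ (Fin.succ i))) = ((i : ℕ) : ℤ) - M
      rw [h1, hτinv]
      simp [Fin.val_succ]
      ring
    -- index for elements of F
    have hidx : ∀ a ∈ F, ∃ i : Fin (2*M+1), ((i : ℕ) : ℤ) - M = a := by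
      intro a ha
      obtain ⟨h1, h2⟩ := hM a ha
      refine ⟨⟨(a + M).toNat, by omega⟩, ?_⟩
      simp only
      omega
    -- (g1 • x0, g • x0) ∈ W
    have key1 : (g1 • x0, g • x0) ∈ W := by
      have hfix : ∀ a ∈ F, (g1 * g⁻¹) a = a := by
        intro a ha
        obtain ⟨i, hi⟩ := hidx a ha
        rw [Equiv.Perm.mul_apply]
        have hga : g (φ i) = a := by rw [hgφ i, hi]
        have : (g⁻¹ : Equiv.Perm ℤ) a = φ i := by
          rw [← hga]; exact g.symm_apply_apply (φ i)
        rw [this, hg1 i, hi]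
      have := hF (g1 * g⁻¹) hfix (g • x0)
      rwa [smul_smul, inv_mul_cancel_right] at this
    -- (g2 • x0, (τ⁻¹ * g) • x0) ∈ W
    have key2 : (g2 • x0, (τ⁻¹ * g) • x0) ∈ W := by
      have hfix : ∀ a ∈ F, (g2 * (τ⁻¹ * g)⁻¹) a = a := by
        intro a ha
        obtain ⟨i, hi⟩ := hidx a ha
        rw [Equiv.Perm.mul_apply]
        have hga : (τ⁻¹ * g) (φ' i) = a := by rw [hgφ' i, hi]
        have : ((τ⁻¹ * g)⁻¹ : Equiv.Perm ℤ) a = φ' i := by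
          rw [← hga]; exact Equiv.symm_apply_apply _ (φ' i)
        rw [this, hg2 i, hi]
      have := hF (g2 * (τ⁻¹ * g)⁻¹) hfix ((τ⁻¹ * g) • x0)
      rwa [smul_smul, inv_mul_cancel_right] at this
    -- equal colors
    have hcφ : c φ = ⟨ctr (g1 • x0), hctrmem _⟩ := by
      rw [hc]
      simp only
      rw [dif_pos hφinj]
    have hcφ' : c φ' = ⟨ctr (g2 • x0), hctrmem _⟩ := by
      rw [hc]
      simp only
      rw [dif_pos hφ'inj]
    have hctreq : ctr (g1 • x0) = ctr (g2 • x0) := by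
      have := hψc
      rw [hcφ, hcφ'] at this
      exact congrArg Subtype.val this
    -- the approximate fixed point
    refine ⟨(τ⁻¹ * g) • x0, ?_⟩
    have hτz : τ • ((τ⁻¹ * g) • x0) = g • x0 := by
      rw [smul_smul, mul_inv_cancel_left]
    rw [hτz]
    have m1 : ((τ⁻¹ * g) • x0, g2 • x0) ∈ W := SetRel.symm W key2
    have m2 : (g2 • x0, ctr (g2 • x0)) ∈ W :=
      SetRel.symm W (hWoW (hctrball (g2 • x0)))
    have m3 : (ctr (g1 • x0), g1 • x0) ∈ W := hWoW (hctrball (g1 • x0))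
    rw [← hctreq] at m2
    exact chain _ _ _ _ _ m1 m2 m3 key1
  -- from approximate to exact fixed points, by compactness
  obtain ⟨z, hτz⟩ : ∃ z : X, τ • z = z := by
    by_contra hno
    push_neg at hno
    have hKcomp : IsCompact (Set.range (fun z : X => (z, τ • z))) :=
      isCompact_range (continuous_id.prodMk (continuous_const_smul τ))
    have hinter : (Set.range (fun z : X => (z, τ • z)) ∩
        ⋂ (V : {V : Set (X × X) // V ∈ 𝓤 X ∧ IsClosed V}), V.1) = ∅ := by
      rw [Set.eq_empty_iff_forall_notMem]
      rintro ⟨p, q⟩ ⟨⟨z, hz⟩, hmem⟩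
      simp only [Prod.mk.injEq] at hz
      rw [Set.mem_iInter] at hmem
      -- (z, τ • z) belongs to every entourage
      have hall : ∀ V ∈ 𝓤 X, (z, τ • z) ∈ V := by
        intro V hV
        obtain ⟨V', ⟨hV'𝓤, hV'closed⟩, hV'V⟩ := uniformity_hasBasis_closed.mem_iff.1 hV
        have := hmem ⟨V', hV'𝓤, hV'closed⟩
        rw [← hz.1, ← hz.2] at this
        exact hV'V this
      -- hence τ • z = z, contradiction
      apply hno z
      by_contra hzz
      have hopen : IsOpen ({z}ᶜ : Set X) := isOpen_compl_singleton
      have hnhd : ({z}ᶜ : Set X) ∈ 𝓝 (τ • z) := hopen.mem_nhds (by simpa using hzz)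
      rw [UniformSpace.mem_nhds_iff] at hnhd
      obtain ⟨V, hV𝓤, hVsub⟩ := hnhd
      have hsymm : (z, τ • z) ∈ SetRel.symmetrize V := hall _ (symmetrize_mem_uniformity hV𝓤)
      have hswap : (τ • z, z) ∈ V := hsymm.2
      have : z ∈ UniformSpace.ball (τ • z) V := hswap
      exact (hVsub this) rfl
    obtain ⟨s, hs⟩ := hKcomp.elim_finite_subfamily_closed _ (fun V => V.2.2) hinter
    have hVstar : (⋂ V ∈ s, (V : {V : Set (X × X) // V ∈ 𝓤 X ∧ IsClosed V}).1) ∈ 𝓤 X :=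
      (Filter.biInter_finset_mem s).2 (fun V _ => V.2.1)
    obtain ⟨z0, hz0⟩ := approx _ hVstar
    rw [Set.eq_empty_iff_forall_notMem] at hs
    exact hs (z0, τ • z0) ⟨⟨z0, rfl⟩, hz0⟩
  exact ⟨z, fun h hh => fixed_of_fixed_shift hτz h hh⟩
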